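/- Let I be a left-hereditary sub-semigroup of 𝒵 and let Z ∈ 𝒵 satisfy Z ≤ ⋁_{Y ∈ I} Y (the pointwise join over all elements of I). Then for every ε > 0 there exist finitely many Y₁, …, Yₙ ∈ I such that Z(t) ⊆ (Y₁ ∨ ⋯ ∨ Yₙ)(t + ε) for all t ∈ [0,∞). -/

import Mathlib

open Set NNReal ENNReal

/-- A "partial order" on `M`: a reflexive and transitive (not necessarily
antisymmetric) relation, identified with a subset of `M × M`. -/
def IsPO {M : Type*} (V : Set (M × M)) : Prop :=
  (∀ j : M, (j, j) ∈ V) ∧ ∀ j k l : M, (j, k) ∈ V → (k, l) ∈ V → (j, l) ∈ V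

/-- The diagonal relation `D`. -/
def diagRel (M : Type*) : Set (M × M) := {p : M × M | p.1 = p.2}

/-- The smallest partial order containing `S` (reflexive-transitive closure). -/
def poGen {M : Type*} (S : Set (M × M)) : Set (M × M) :=
  ⋂₀ {V : Set (M × M) | IsPO V ∧ S ⊆ V}

/-- The join of two partial orders: the smallest partial order containing their union. -/
def poJoin {M : Type*} (V W : Set (M × M)) : Set (M × M) := poGen (V ∪ W)

/-- Membership in `𝒴`: maps `Y : [0,∞) → {partial orders on M}` with `Y 0 = D`,
increasing, and left-continuous. -/
def MemY {M : Type*} (Y : ℝ≥0 → Set (M × M)) : Prop :=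
  (∀ t : ℝ≥0, IsPO (Y t)) ∧ Y 0 = diagRel M ∧
    (∀ s t : ℝ≥0, s ≤ t → Y s ⊆ Y t) ∧
    ∀ t : ℝ≥0, 0 < t → Y t = ⋃ s ∈ Set.Iio t, Y s

/-- The pointwise join on `𝒴`. -/
def joinY {M : Type*} (Y Z : ℝ≥0 → Set (M × M)) : ℝ≥0 → Set (M × M) :=
  fun t => poJoin (Y t) (Z t)

/-- The support of a partial order `V`. -/
def suppV {M : Type*} (V : Set (M × M)) : Set M :=
  {j : M | ∃ k : M, k ≠ j ∧ ((j, k) ∈ V ∨ (k, j) ∈ V)}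

/-- The support of an order process `Y ∈ 𝒴`. -/
def suppY {M : Type*} (Y : ℝ≥0 → Set (M × M)) : Set M := ⋃ t : ℝ≥0, suppV (Y t)

/-- Membership in `𝒵`: elements of `𝒴` with finite support. -/
def MemZ {M : Type*} (Y : ℝ≥0 → Set (M × M)) : Prop := MemY Y ∧ (suppY Y).Finite

/-- The order on `𝒴`: `Y ≤ Z` iff `Y ∨ Z = Z`. -/
def leY {M : Type*} (Y Z : ℝ≥0 → Set (M × M)) : Prop := joinY Y Z = Z

/-- A sub-semigroup of `𝒵`. -/
def IsSubsemigroupZ {M : Type*} (I : Set (ℝ≥0 → Set (M × M))) : Prop :=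
  (∀ Y ∈ I, MemZ Y) ∧ ∀ Y ∈ I, ∀ Z ∈ I, joinY Y Z ∈ I

/-- Left-hereditary sub-semigroups. -/
def LeftHereditary {M : Type*} (I : Set (ℝ≥0 → Set (M × M))) : Prop :=
  ∀ Z₁ Z₂ : ℝ≥0 → Set (M × M), MemZ Z₁ → Z₂ ∈ I → leY Z₁ Z₂ → Z₁ ∈ I

/-- The pointwise join of a set of order processes. -/
def joinSetY {M : Type*} (I : Set (ℝ≥0 → Set (M × M))) : ℝ≥0 → Set (M × M) :=
  fun t => poGen (⋃ Y ∈ I, Y t)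

/-- The pointwise join of a family of order processes. -/
def joinFam {M : Type*} {ι : Type*} (Z : ι → ℝ≥0 → Set (M × M)) : ℝ≥0 → Set (M × M) :=
  fun t => poGen (⋃ i, Z i t)

lemma diag_mem_poGen {M : Type*} (S : Set (M × M)) (j : M) : (j, j) ∈ poGen S :=
  fun _ hV => hV.1.1 j

lemma subset_poGen {M : Type*} (S : Set (M × M)) : S ⊆ poGen S :=
  fun _ hp _ hV => hV.2 hp

lemma isPO_poGen {M : Type*} (S : Set (M × M)) : IsPO (poGen S) :=
  ⟨fun j _ hV => hV.1.1 j,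
   fun j k l h1 h2 V hV => hV.1.2 j k l (h1 V hV) (h2 V hV)⟩

lemma poGen_subset {M : Type*} {S V : Set (M × M)} (hV : IsPO V) (hS : S ⊆ V) :
    poGen S ⊆ V := fun _ hp => hp V ⟨hV, hS⟩

lemma poGen_mono {M : Type*} {S T : Set (M × M)} (h : S ⊆ T) : poGen S ⊆ poGen T :=
  poGen_subset (isPO_poGen T) (h.trans (subset_poGen T))

lemma poGen_compact {M : Type*} {S : Set (M × M)} {p : M × M} (hp : p ∈ poGen S) :
    ∃ S₀ ⊆ S, S₀.Finite ∧ p ∈ poGen S₀ := by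
  set W : Set (M × M) := {q | ∃ S₀ ⊆ S, S₀.Finite ∧ q ∈ poGen S₀} with hW
  have hWpo : IsPO W := by
    constructor
    · intro j
      exact ⟨∅, empty_subset _, finite_empty, diag_mem_poGen _ j⟩
    · rintro j k l ⟨S₀, hS₀, hf₀, h0⟩ ⟨S₁, hS₁, hf₁, h1⟩
      exact ⟨S₀ ∪ S₁, union_subset hS₀ hS₁, hf₀.union hf₁,
        (isPO_poGen _).2 j k l (poGen_mono subset_union_left h0)
          (poGen_mono subset_union_right h1)⟩
  exact poGen_subset hWpo
    (fun q hq => ⟨{q}, singleton_subset_iff.2 hq, finite_singleton q,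
      subset_poGen _ (mem_singleton q)⟩) hp

/-- If `I` is a left-hereditary sub-semigroup of `𝒵` and `Z ∈ 𝒵` with
`Z ≤ ⋁_{Y ∈ I} Y`, then for each `ε > 0`, `Z(t)` is dominated by the join of
finitely many elements of `I` taken at time `t + ε`, for all `t`. -/
theorem finitely_many_suffice {M : Type*} [Countable M] [Infinite M]
    (I : Set (ℝ≥0 → Set (M × M))) (hI : IsSubsemigroupZ I) (hIh : LeftHereditary I)
    (Z : ℝ≥0 → Set (M × M)) (hZ : MemZ Z) (hle : leY Z (joinSetY I)) :
    ∀ ε : ℝ≥0, 0 < ε → ∃ (n : ℕ) (Ys : Fin n → ℝ≥0 → Set (M × M)),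
      (∀ i, Ys i ∈ I) ∧ ∀ t : ℝ≥0, Z t ⊆ joinFam Ys (t + ε) := by
  intro ε hε
  classical
  obtain ⟨⟨hZpo, hZ0, hZmono, hZlc⟩, hZfin⟩ := hZ
  have hsub : ∀ t, Z t ⊆ joinSetY I t := by
    intro t
    have h := congrFun hle t
    calc Z t ⊆ Z t ∪ joinSetY I t := subset_union_left
      _ ⊆ poGen (Z t ∪ joinSetY I t) := subset_poGen _
      _ = joinSetY I t := h
  set P : Set (M × M) := {p | p.1 ≠ p.2 ∧ ∃ t, p ∈ Z t} with hPdef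
  have hPfin : P.Finite := by
    apply (hZfin.prod hZfin).subset
    rintro ⟨j, k⟩ ⟨hne, t, ht⟩
    exact ⟨mem_iUnion.2 ⟨t, k, hne.symm, Or.inl ht⟩,
           mem_iUnion.2 ⟨t, j, hne, Or.inr ht⟩⟩
  have key : ∀ p : M × M, ∃ G : Set (ℝ≥0 → Set (M × M)), G ⊆ I ∧ G.Finite ∧
      (p ∈ P → ∀ t, p ∈ Z t → p ∈ poGen (⋃ Y ∈ G, Y (t + ε))) := by
    intro p
    by_cases hp : p ∈ P
    · obtain ⟨hne, t₀, ht₀⟩ := hp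
      set s := sInf {t | p ∈ Z t} with hs
      have hbdd : BddBelow {t | p ∈ Z t} := ⟨0, fun x _ => zero_le⟩
      have hmem : ∀ t, s < t → p ∈ Z t := by
        intro t ht
        obtain ⟨t', ht', hlt⟩ := exists_lt_of_csInf_lt ⟨t₀, ht₀⟩ ht
        exact hZmono t' t hlt.le ht'
      have hsp : p ∈ Z (s + ε) := hmem _ (lt_add_of_pos_right s hε)
      obtain ⟨S₀, hS₀sub, hS₀fin, hS₀⟩ := poGen_compact (hsub (s + ε) hsp)
      have hchoice : ∀ q : M × M, ∃ Y : ℝ≥0 → Set (M × M),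
          q ∈ S₀ → Y ∈ I ∧ q ∈ Y (s + ε) := by
        intro q
        by_cases hq : q ∈ S₀
        · obtain ⟨A, hA⟩ := mem_iUnion.1 (hS₀sub hq)
          obtain ⟨hAI, hqA⟩ := mem_iUnion.1 hA
          exact ⟨A, fun _ => ⟨hAI, hqA⟩⟩
        · exact ⟨fun _ => ∅, fun h => absurd h hq⟩
      choose f hf using hchoice
      refine ⟨f '' S₀, ?_, hS₀fin.image f, ?_⟩
      · rintro Y ⟨q, hq, rfl⟩
        exact (hf q hq).1
      · intro _ t hpt
        have hst : s ≤ t := csInf_le hbdd hpt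
        have h1 : p ∈ poGen (⋃ Y ∈ f '' S₀, Y (s + ε)) := by
          refine poGen_mono ?_ hS₀
          intro q hq
          exact mem_iUnion.2 ⟨f q, mem_iUnion.2 ⟨mem_image_of_mem f hq, (hf q hq).2⟩⟩
        refine poGen_mono ?_ h1
        refine iUnion_mono fun Y => iUnion_mono fun hY => ?_
        rcases hY with ⟨q, hq, rfl⟩
        exact (hI.1 _ ((fun Y ⟨q, hq, h⟩ => h ▸ (hf q hq).1 : ∀ Y ∈ f '' S₀, Y ∈ I)
          (f q) ⟨q, hq, rfl⟩)).1.2.2.1 _ _ (by exact add_le_add_left hst ε)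
    · exact ⟨∅, empty_subset _, finite_empty, fun h => absurd h hp⟩
  choose G hGI hGfin hGkey using key
  have hGall : (⋃ p ∈ P, G p).Finite := hPfin.biUnion fun p _ => hGfin p
  obtain ⟨n, f, hf⟩ := hGall.fin_embedding
  refine ⟨n, fun i => f i, ?_, ?_⟩
  · intro i
    have : (f i : ℝ≥0 → Set (M × M)) ∈ ⋃ p ∈ P, G p := hf ▸ mem_range_self i
    obtain ⟨p, hp⟩ := mem_iUnion.1 this
    obtain ⟨hpP, hpG⟩ := mem_iUnion.1 hp
    exact hGI p hpG
  · intro t q hq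
    obtain ⟨j, k⟩ := q
    by_cases hjk : j = k
    · subst hjk
      exact diag_mem_poGen _ j
    · have hP : (j, k) ∈ P := ⟨hjk, t, hq⟩
      have h1 := hGkey (j, k) hP t hq
      refine poGen_mono ?_ h1
      intro r hr
      obtain ⟨A, hA⟩ := mem_iUnion.1 hr
      obtain ⟨hAG, hrA⟩ := mem_iUnion.1 hA
      have : A ∈ ⋃ p ∈ P, G p := mem_iUnion.2 ⟨(j, k), mem_iUnion.2 ⟨hP, hAG⟩⟩
      rw [← hf] at this
      obtain ⟨i, rfl⟩ := this
      exact mem_iUnion.2 ⟨i, hrA⟩
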